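/- There is an epistemic space for which there exist strictly more AGM contraction operators than AGM revision operators; concretely, for the epistemic space E¹ = ⟨𝓔₁, mod⟩, the set of AGM contraction operators for E¹ has strictly greater cardinality than the set of AGM revision operators for E¹ (the latter set being empty while the former is nonempty). -/
import Mathlib


open Set

/-- `minSet r S` is the set of `r`-minimal elements of `S`:
`min(S, r) = {ω ∈ S : r ω ω' for all ω' ∈ S}`. -/
def minSet {Ω : Type*} (r : Ω → Ω → Prop) (S : Set Ω) : Set Ω :=
  {ω ∈ S | ∀ ω' ∈ S, r ω ω'}

/-- A linear order as a relation: total, antisymmetric and transitive. -/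
def IsLinRel {Ω : Type*} (r : Ω → Ω → Prop) : Prop :=
  (∀ a b, r a b ∨ r b a) ∧ (∀ a b, r a b → r b a → a = b) ∧
    (∀ a b c, r a b → r b c → r a c)

/-- AGM contraction operator for the epistemic space `⟨E, md⟩` (postulates C1–C7,
formulated on model sets). -/
def IsContraction {Ω E : Type*} (md : E → Set Ω) (c : E → Set Ω → E) : Prop :=
  ∀ (Ψ : E) (A B : Set Ω),
    md Ψ ⊆ md (c Ψ A) ∧
    (¬ md Ψ ⊆ A → md (c Ψ A) ⊆ md Ψ) ∧
    (A ≠ Set.univ → ¬ md (c Ψ A) ⊆ A) ∧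
    md (c Ψ A) ∩ A ⊆ md Ψ ∧
    md (c Ψ (A ∩ B)) ⊆ md (c Ψ A) ∪ md (c Ψ B) ∧
    (¬ md (c Ψ (A ∩ B)) ⊆ B → md (c Ψ B) ⊆ md (c Ψ (A ∩ B)))

/-- AGM revision operator for the epistemic space `⟨E, md⟩` (postulates R1–R6,
formulated on model sets). -/
def IsRevision {Ω E : Type*} (md : E → Set Ω) (s : E → Set Ω → E) : Prop :=
  ∀ (Ψ : E) (A B : Set Ω),
    md (s Ψ A) ⊆ A ∧
    (md Ψ ∩ A ≠ ∅ → md (s Ψ A) = md Ψ ∩ A) ∧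
    (A ≠ ∅ → md (s Ψ A) ≠ ∅) ∧
    md (s Ψ A) ∩ B ⊆ md (s Ψ (A ∩ B)) ∧
    (md (s Ψ A) ∩ B ≠ ∅ → md (s Ψ (A ∩ B)) ⊆ md (s Ψ A) ∩ B)

/-- Postulate (ZC). -/
def ZC {Ω E : Type*} (md : E → Set Ω) : Prop :=
  ∀ (Ψ : E) (M : Set Ω), md Ψ ⊆ M → ∃ Ψ' : E, md Ψ' = M

/-- Postulate (ZR1). -/
def ZR1 {Ω E : Type*} (md : E → Set Ω) : Prop :=
  ∀ ω : Ω, ∃ Ψ : E, md Ψ = {ω}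

/-- Postulate (ZR2). -/
def ZR2 {Ω E : Type*} (md : E → Set Ω) : Prop :=
  ∀ (Ψ : E) (M : Set Ω), M ⊆ md Ψ → ∃ Ψ' : E, md Ψ' = M

/-- Postulate (Unbiased). -/
def Unbiased {Ω E : Type*} (md : E → Set Ω) : Prop :=
  ∀ M : Set Ω, ∃ Ψ : E, md Ψ = M

/-- Maxichoice contraction operator. -/
def IsMaxichoiceContraction {Ω E : Type*} (md : E → Set Ω) (c : E → Set Ω → E) : Prop :=
  IsContraction md c ∧
    ∀ Ψ : E, ∃ r : Ω → Ω → Prop, IsLinRel r ∧ ∀ A : Set Ω,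
      (¬ md Ψ ⊆ A → md (c Ψ A) = md Ψ) ∧
      (md Ψ ⊆ A → md (c Ψ A) = md Ψ ∪ minSet r Aᶜ)

/-- Linear contraction operator: a maxichoice contraction operator based on one
single linear order for all epistemic states. -/
def IsLinearContraction {Ω E : Type*} (md : E → Set Ω) (c : E → Set Ω → E) : Prop :=
  IsContraction md c ∧
    ∃ r : Ω → Ω → Prop, IsLinRel r ∧ ∀ (Ψ : E) (A : Set Ω),
      (¬ md Ψ ⊆ A → md (c Ψ A) = md Ψ) ∧
      (md Ψ ⊆ A → md (c Ψ A) = md Ψ ∪ minSet r Aᶜ)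

/-- Full meet contraction operator. -/
def IsFullMeetContraction {Ω E : Type*} (md : E → Set Ω) (c : E → Set Ω → E) : Prop :=
  IsContraction md c ∧
    ∀ (Ψ : E) (A : Set Ω),
      (¬ md Ψ ⊆ A → md (c Ψ A) = md Ψ) ∧
      (md Ψ ⊆ A → md (c Ψ A) = md Ψ ∪ Aᶜ)

/-- Maxichoice revision operator. -/
def IsMaxichoiceRevision {Ω E : Type*} (md : E → Set Ω) (s : E → Set Ω → E) : Prop :=
  IsRevision md s ∧
    ∀ Ψ : E, ∃ r : Ω → Ω → Prop, IsLinRel r ∧ ∀ A : Set Ω,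
      (md Ψ ∩ A ≠ ∅ → md (s Ψ A) = md Ψ ∩ A) ∧
      (md Ψ ∩ A = ∅ → md (s Ψ A) = minSet r A)

/-- Linear revision operator: a maxichoice revision operator based on one single
linear order for all epistemic states. -/
def IsLinearRevision {Ω E : Type*} (md : E → Set Ω) (s : E → Set Ω → E) : Prop :=
  IsRevision md s ∧
    ∃ r : Ω → Ω → Prop, IsLinRel r ∧ ∀ (Ψ : E) (A : Set Ω),
      (md Ψ ∩ A ≠ ∅ → md (s Ψ A) = md Ψ ∩ A) ∧
      (md Ψ ∩ A = ∅ → md (s Ψ A) = minSet r A)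

/-- Full meet revision operator. -/
def IsFullMeetRevision {Ω E : Type*} (md : E → Set Ω) (s : E → Set Ω → E) : Prop :=
  IsRevision md s ∧
    ∀ (Ψ : E) (A : Set Ω),
      (md Ψ ∩ A ≠ ∅ → md (s Ψ A) = md Ψ ∩ A) ∧
      (md Ψ ∩ A = ∅ → md (s Ψ A) = A)


/-- The epistemic space `E¹` over `Ω₁ = Fin 2` (worlds `ω₁, ω₂`): three states
`Ψ₁, Ψ₂, Ψ_⊤` with `mod Ψ₁ = {ω₁}`, `mod Ψ₂ = {ω₂}` and `mod Ψ_⊤ = Ω₁`. -/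
def md1 : Fin 3 → Set (Fin 2) := ![{0}, {1}, Set.univ]

section Aux

open Classical in
/-- Full meet contraction on `E¹`. -/
noncomputable def c1 : Fin 3 → Set (Fin 2) → Fin 3 :=
  fun Ψ A => if md1 Ψ ⊆ A ∧ A ≠ Set.univ then 2 else Ψ

lemma set_fin2 (S : Set (Fin 2)) :
    S = ∅ ∨ S = {0} ∨ S = {1} ∨ S = Set.univ := by
  by_cases h0 : (0 : Fin 2) ∈ S <;> by_cases h1 : (1 : Fin 2) ∈ S
  · right; right; right; ext x; fin_cases x <;> simp [h0, h1]
  · right; left; ext x; fin_cases x <;> simp [h0, h1]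
  · right; right; left; ext x; fin_cases x <;> simp [h0, h1]
  · left; ext x; fin_cases x <;> simp [h0, h1]

lemma md1_0 : md1 0 = {0} := rfl
lemma md1_1 : md1 1 = {1} := rfl
lemma md1_2 : md1 2 = Set.univ := rfl

lemma i01 : ({0} : Set (Fin 2)) ∩ {1} = ∅ := by
  ext x; fin_cases x <;> simp

lemma i10 : ({1} : Set (Fin 2)) ∩ {0} = ∅ := by
  ext x; fin_cases x <;> simp

lemma s0ne : ({0} : Set (Fin 2)) ≠ Set.univ := by
  intro h
  have : (1 : Fin 2) ∈ ({0} : Set (Fin 2)) := h ▸ Set.mem_univ _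
  simp at this

lemma s1ne : ({1} : Set (Fin 2)) ≠ Set.univ := by
  intro h
  have : (0 : Fin 2) ∈ ({1} : Set (Fin 2)) := h ▸ Set.mem_univ _
  simp at this

lemma c1_empty (Ψ : Fin 3) : c1 Ψ ∅ = Ψ := by
  unfold c1
  rw [if_neg]
  rintro ⟨h, -⟩
  fin_cases Ψ
  · exact absurd (h rfl) (by simp)
  · exact absurd (h rfl) (by simp)
  · exact absurd (h (Set.mem_univ 0)) (by simp)

lemma c1_univ (Ψ : Fin 3) : c1 Ψ Set.univ = Ψ := by
  unfold c1; rw [if_neg]; rintro ⟨-, h⟩; exact h rfl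

lemma c1_00 : c1 0 {0} = 2 := by
  unfold c1; rw [if_pos]; exact ⟨by simp [md1_0], s0ne⟩

lemma c1_01 : c1 0 {1} = 0 := by
  unfold c1; rw [if_neg]; rintro ⟨h, -⟩
  have := h (show (0:Fin 2) ∈ md1 0 from rfl); simp_all

lemma c1_10 : c1 1 {0} = 1 := by
  unfold c1; rw [if_neg]; rintro ⟨h, -⟩
  have := h (show (1:Fin 2) ∈ md1 1 from rfl); simp_all

lemma c1_11 : c1 1 {1} = 2 := by
  unfold c1; rw [if_pos]; exact ⟨by simp [md1_1], s1ne⟩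

lemma c1_20 : c1 2 {0} = 2 := by
  unfold c1
  by_cases h : md1 2 ⊆ ({0} : Set (Fin 2)) ∧ ({0} : Set (Fin 2)) ≠ Set.univ
  · rw [if_pos h]
  · rw [if_neg h]

lemma c1_21 : c1 2 {1} = 2 := by
  unfold c1
  by_cases h : md1 2 ⊆ ({1} : Set (Fin 2)) ∧ ({1} : Set (Fin 2)) ≠ Set.univ
  · rw [if_pos h]
  · rw [if_neg h]

lemma fin3_cases (x : Fin 3) : x = 0 ∨ x = 1 ∨ x = 2 := by omega

lemma c1_contraction : IsContraction md1 c1 := by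
  intro P A B
  rcases set_fin2 A with hA | hA | hA | hA <;>
    rcases set_fin2 B with hB | hB | hB | hB <;>
      subst hA <;> subst hB <;>
      rcases fin3_cases P with hP | hP | hP <;> subst hP <;>
        refine ⟨?_, ?_, ?_, ?_, ?_, ?_⟩ <;>
          simp only [Set.empty_inter, Set.inter_empty, Set.univ_inter,
            Set.inter_univ, Set.inter_self, i01, i10,
            c1_empty, c1_univ, c1_00, c1_01, c1_10, c1_11, c1_20, c1_21,
            md1_0, md1_1, md1_2] <;>
          simp [Set.subset_def, Set.eq_univ_iff_forall] <;> decide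

lemma no_revision : ¬ ∃ s : Fin 3 → Set (Fin 2) → Fin 3, IsRevision md1 s := by
  rintro ⟨s, hs⟩
  have h1 := (hs 0 ∅ ∅).1
  have h2 : (md1 (s 0 ∅)).Nonempty := by
    rcases fin3_cases (s 0 ∅) with h | h | h <;> rw [h] <;>
      first | exact ⟨0, rfl⟩ | exact ⟨1, rfl⟩ | exact ⟨0, trivial⟩
  obtain ⟨x, hx⟩ := h2
  exact absurd (h1 hx) (by simp)

end Aux

/-- For the epistemic space `E¹` there are strictly more AGM
contraction operators than AGM revision operators: the set of revision
operators is empty, the set of contraction operators is nonempty, and hence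
the former has strictly smaller cardinality than the latter. -/
theorem E1_more_contractions_than_revisions :
    (¬ ∃ s : Fin 3 → Set (Fin 2) → Fin 3, IsRevision md1 s) ∧
      (∃ c : Fin 3 → Set (Fin 2) → Fin 3, IsContraction md1 c) ∧
      Cardinal.mk {s : Fin 3 → Set (Fin 2) → Fin 3 // IsRevision md1 s} <
        Cardinal.mk {c : Fin 3 → Set (Fin 2) → Fin 3 // IsContraction md1 c} := by
  refine ⟨no_revision, ⟨c1, c1_contraction⟩, ?_⟩
  have he : IsEmpty {s : Fin 3 → Set (Fin 2) → Fin 3 // IsRevision md1 s} :=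
    ⟨fun ⟨s, hs⟩ => no_revision ⟨s, hs⟩⟩
  rw [Cardinal.mk_eq_zero]
  exact (Cardinal.mk_ne_zero_iff.mpr ⟨⟨c1, c1_contraction⟩⟩).bot_lt
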